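/- Let G=(V,E) be a finite simple graph with functions g,t : V → ℕ taking only positive integer values such that for all distinct x,y ∈ V, {x,y} ∈ E iff g(x)+g(y) ≥ min(t(x),t(y)), and let K = max_{v∈V} t(v). Let T be the caterpillar whose spine consists of vertices x_1, …, x_K joined in a path with each spine edge of weight 1/2, and which has one leaf l_v for each v ∈ V attached to spine vertex x_{t(v)} by an edge of weight g(v) + (K − t(v))/2. Then for all distinct u,v ∈ V, the weighted distance in T between l_u and l_v equals g(u) + g(v) + K − min(t(u), t(v)); consequently this distance is always at least 2, and it is at least K if and only if {u,v} ∈ E. (The key computation in the proof of Theorem 3.) -/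

import Mathlib

open Classical

/-- The caterpillar with spine `x_1, …, x_K` (represented as `Sum.inl i` for
`i : Fin K`, with `x_{i+1}` corresponding to `Sum.inl i`) joined in a path, and one
leaf `l_v = Sum.inr v` for each `v : V`, attached to the spine vertex `x_{t v}`. -/
def caterpillar (K : ℕ) (V : Type) (t : V → ℕ) : SimpleGraph (Fin K ⊕ V) :=
  SimpleGraph.fromRel (fun a b =>
    (∃ i j : Fin K, a = Sum.inl i ∧ b = Sum.inl j ∧ (j : ℕ) = (i : ℕ) + 1) ∨
    (∃ (i : Fin K) (v : V), a = Sum.inl i ∧ b = Sum.inr v ∧ (i : ℕ) + 1 = t v))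

/-- The edge weights of the caterpillar: every spine edge gets weight `1/2`, and the
edge attaching the leaf `l_v` gets weight `g v + (K - t v) / 2`.  (Edges between two
leaves do not occur in the caterpillar, so the value chosen there is irrelevant.) -/
noncomputable def caterpillarWeight (K : ℕ) (V : Type) (g t : V → ℕ) :
    Sym2 (Fin K ⊕ V) → ℝ := fun e =>
  if hv : ∃ v : V, Sum.inr v ∈ e then
    (g hv.choose : ℝ) + ((K : ℝ) - (t hv.choose : ℝ)) / 2
  else 1 / 2

namespace CatAux

open SimpleGraph SimpleGraph.Walk

variable {V : Type} {K : ℕ} {g t : V → ℕ}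

lemma weight_spine (i j : Fin K) :
    caterpillarWeight K V g t s(Sum.inl i, Sum.inl j) = 1 / 2 := by
  unfold caterpillarWeight
  rw [dif_neg]
  rintro ⟨v, hv⟩
  rw [Sym2.mem_iff] at hv
  rcases hv with h | h <;> exact nomatch h

lemma weight_leaf (i : Fin K) (v : V) :
    caterpillarWeight K V g t s(Sum.inl i, Sum.inr v)
      = (g v : ℝ) + ((K : ℝ) - (t v : ℝ)) / 2 := by
  unfold caterpillarWeight
  have hv : ∃ w : V, Sum.inr w ∈ (s(Sum.inl i, Sum.inr v) : Sym2 (Fin K ⊕ V)) :=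
    ⟨v, by simp⟩
  rw [dif_pos hv]
  have hc := hv.choose_spec
  rw [Sym2.mem_iff] at hc
  rcases hc with h | h
  · exact absurd h (by simp)
  · have hcv : hv.choose = v := by injection h
    rw [hcv]

lemma adj_inr {v : V} {b : Fin K ⊕ V} (h : (caterpillar K V t).Adj (Sum.inr v) b) :
    ∃ i : Fin K, b = Sum.inl i ∧ (i : ℕ) + 1 = t v := by
  rw [caterpillar, SimpleGraph.fromRel_adj] at h
  obtain ⟨-, h | h⟩ := h
  · rcases h with ⟨i, j, h1, -, -⟩ | ⟨i, w, h1, -, -⟩ <;> exact nomatch h1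
  · rcases h with ⟨i, j, h1, h2, h3⟩ | ⟨i, w, h1, h2, h3⟩
    · exact nomatch h2
    · obtain rfl : w = v := by injection h2 with h'; exact h'.symm
      exact ⟨i, h1, h3⟩

lemma adj_inl_inr {i : Fin K} {v : V} (h : (caterpillar K V t).Adj (Sum.inl i) (Sum.inr v)) :
    (i : ℕ) + 1 = t v := by
  obtain ⟨j, hj, hjv⟩ := adj_inr h.symm
  obtain rfl : j = i := by injection hj with h'; exact h'.symm
  exact hjv

lemma adj_inl_inl {i j : Fin K} (h : (caterpillar K V t).Adj (Sum.inl i) (Sum.inl j)) :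
    (j : ℕ) = (i : ℕ) + 1 ∨ (i : ℕ) = (j : ℕ) + 1 := by
  rw [caterpillar, SimpleGraph.fromRel_adj] at h
  obtain ⟨-, h | h⟩ := h
  · rcases h with ⟨i', j', h1, h2, h3⟩ | ⟨i', w, h1, h2, h3⟩
    · obtain rfl : i' = i := by injection h1 with h'; exact h'.symm
      obtain rfl : j' = j := by injection h2 with h'; exact h'.symm
      exact Or.inl h3
    · exact nomatch h2
  · rcases h with ⟨i', j', h1, h2, h3⟩ | ⟨i', w, h1, h2, h3⟩
    · obtain rfl : i' = j := by injection h1 with h'; exact h'.symm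
      obtain rfl : j' = i := by injection h2 with h'; exact h'.symm
      exact Or.inr h3
    · exact nomatch h2

/-- Key lemma: every path from a spine vertex `inl a` to a leaf `inr v` has weight
sum `dist (a+1) (t v) / 2 + g v + (K - t v)/2`, and its support contains every
spine vertex between `a` and `t v - 1`. -/
lemma key (ht : ∀ v, 0 < t v) :
    ∀ (n : ℕ) (a : Fin K) (v : V)
      (p : (caterpillar K V t).Walk (Sum.inl a) (Sum.inr v)),
      p.length ≤ n → p.IsPath →
      ((p.edges.map (caterpillarWeight K V g t)).sum
          = (Nat.dist ((a : ℕ) + 1) (t v) : ℝ) / 2 + (g v : ℝ) + ((K : ℝ) - (t v : ℝ)) / 2) ∧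
      (∀ j : Fin K, min (a : ℕ) (t v - 1) ≤ (j : ℕ) → (j : ℕ) ≤ max (a : ℕ) (t v - 1) →
        Sum.inl j ∈ p.support) := by
  intro n
  induction n with
  | zero =>
    intro a v p hlen hp
    cases p with
    | cons h q => simp at hlen
  | succ n ih =>
    intro a v p hlen hp
    cases p with
    | @cons _ b _ h q =>
      rw [Walk.cons_isPath_iff] at hp
      cases b with
      | inr w =>
        have hw : (a : ℕ) + 1 = t w := adj_inl_inr h
        cases q with
        | nil =>
          constructor
          · rw [Walk.edges_cons, Walk.edges_nil, List.map_cons, List.map_nil,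
              List.sum_cons, List.sum_nil, weight_leaf]
            rw [hw, Nat.dist_self]
            push_cast
            ring
          · intro j h1 h2
            have hj : (j : ℕ) = (a : ℕ) := by omega
            have : j = a := Fin.ext hj
            subst this
            simp [Walk.support_cons, Walk.support_nil]
        | @cons _ c _ h' q' =>
          exfalso
          obtain ⟨i2, rfl, hi2⟩ := adj_inr h'
          have : i2 = a := Fin.ext (by omega)
          subst this
          exact hp.2 (by simp [Walk.support_cons])
      | inl a' =>
        have hlen' : q.length ≤ n := by
          simp only [Walk.length_cons] at hlen; omega
        obtain ⟨hsum, hsupp⟩ := ih a' v q hlen' hp.1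
        have hnot : ¬ (min (a' : ℕ) (t v - 1) ≤ (a : ℕ) ∧
            (a : ℕ) ≤ max (a' : ℕ) (t v - 1)) := by
          rintro ⟨h1, h2⟩
          exact hp.2 (hsupp a h1 h2)
        have htv1 : 1 ≤ t v := ht v
        rcases adj_inl_inl h with hc | hc
        · -- a' = a + 1
          have hlt : (a : ℕ) + 1 < t v := by
            by_contra hle
            exact hnot ⟨by omega, by omega⟩
          constructor
          · rw [Walk.edges_cons, List.map_cons, List.sum_cons, weight_spine, hsum]
            have hd : Nat.dist ((a' : ℕ) + 1) (t v) + 1 = Nat.dist ((a : ℕ) + 1) (t v) := by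
              rw [Nat.dist_eq_sub_of_le (by omega), Nat.dist_eq_sub_of_le (by omega)]
              omega
            have hd' := congrArg (Nat.cast : ℕ → ℝ) hd
            push_cast at hd'
            linarith
          · intro j h1 h2
            rw [Walk.support_cons]
            rcases eq_or_ne ((j : ℕ)) ((a : ℕ)) with hj | hj
            · exact (Fin.ext hj : j = a) ▸ List.mem_cons_self
            · exact List.mem_cons_of_mem _ (hsupp j (by omega) (by omega))
        · -- a = a' + 1
          have hlt : t v ≤ (a : ℕ) := by
            by_contra hle
            exact hnot ⟨by omega, by omega⟩
          constructor
          · rw [Walk.edges_cons, List.map_cons, List.sum_cons, weight_spine, hsum]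
            have hd : Nat.dist ((a' : ℕ) + 1) (t v) + 1 = Nat.dist ((a : ℕ) + 1) (t v) := by
              rw [Nat.dist_eq_sub_of_le_right (by omega),
                Nat.dist_eq_sub_of_le_right (by omega)]
              omega
            have hd' := congrArg (Nat.cast : ℕ → ℝ) hd
            push_cast at hd'
            linarith
          · intro j h1 h2
            rw [Walk.support_cons]
            rcases eq_or_ne ((j : ℕ)) ((a : ℕ)) with hj | hj
            · exact (Fin.ext hj : j = a) ▸ List.mem_cons_self
            · exact List.mem_cons_of_mem _ (hsupp j (by omega) (by omega))

/-- Existence of a spine path going up by `d`. -/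
lemma spine_walk (d : ℕ) :
    ∀ a b : Fin K, (b : ℕ) = (a : ℕ) + d →
      ∃ w : (caterpillar K V t).Walk (Sum.inl a) (Sum.inl b),
        w.IsPath ∧ ∀ x ∈ w.support, ∃ j : Fin K, x = Sum.inl j ∧ (a : ℕ) ≤ (j : ℕ) := by
  induction d with
  | zero =>
    intro a b hb
    have : a = b := Fin.ext (by omega)
    subst this
    refine ⟨Walk.nil, Walk.IsPath.nil, ?_⟩
    intro x hx
    rw [Walk.support_nil, List.mem_singleton] at hx
    exact ⟨a, hx, le_refl _⟩
  | succ d ih =>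
    intro a b hb
    have ha1 : (a : ℕ) + 1 < K := by have := b.isLt; omega
    obtain ⟨w, hw, hws⟩ := ih ⟨(a : ℕ) + 1, ha1⟩ b (by simp; omega)
    have hadj : (caterpillar K V t).Adj (Sum.inl a) (Sum.inl ⟨(a : ℕ) + 1, ha1⟩) := by
      rw [caterpillar, SimpleGraph.fromRel_adj]
      refine ⟨?_, Or.inl (Or.inl ⟨a, ⟨(a : ℕ) + 1, ha1⟩, rfl, rfl, rfl⟩)⟩
      intro hcon
      have : (a : ℕ) = (a : ℕ) + 1 := by
        have := (Sum.inl.injEq (α := Fin K) (β := V) _ _).mp hcon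
        exact congrArg Fin.val this
      omega
    refine ⟨Walk.cons hadj w, ?_, ?_⟩
    · rw [Walk.cons_isPath_iff]
      refine ⟨hw, fun hmem => ?_⟩
      obtain ⟨j, hj, hja⟩ := hws _ hmem
      have haj : a = j := by injection hj
      subst haj
      have h2 : (a : ℕ) + 1 ≤ (a : ℕ) := hja
      omega
    · intro x hx
      rw [Walk.support_cons, List.mem_cons] at hx
      rcases hx with hx | hx
      · subst hx; exact ⟨a, rfl, le_refl _⟩
      · obtain ⟨j, hj, hja⟩ := hws _ hx
        have h2 : (a : ℕ) + 1 ≤ (j : ℕ) := hja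
        exact ⟨j, hj, by omega⟩

end CatAux

open CatAux SimpleGraph SimpleGraph.Walk in
/-- The key computation in the proof of Theorem 3: in the caterpillar, the weighted
distance between the leaves `l_u` and `l_v` equals `g u + g v + K - min (t u) (t v)`;
consequently it is at least `2`, and it is at least `K` iff `u` and `v` are adjacent. -/
theorem caterpillar_leaf_dist {V : Type} [Fintype V] (G : SimpleGraph V)
    (g t : V → ℕ) (K : ℕ)
    (hg : ∀ v, 0 < g v) (ht : ∀ v, 0 < t v)
    (hKub : ∀ v, t v ≤ K) (hKmax : ∃ v, t v = K)
    (hadj : ∀ x y : V, x ≠ y → (G.Adj x y ↔ min (t x) (t y) ≤ g x + g y)) :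
    ∀ u v : V, u ≠ v →
      (∃ p : (caterpillar K V t).Walk (Sum.inr u) (Sum.inr v), p.IsPath) ∧
      ∀ p : (caterpillar K V t).Walk (Sum.inr u) (Sum.inr v), p.IsPath →
        (p.edges.map (caterpillarWeight K V g t)).sum =
            (g u : ℝ) + (g v : ℝ) + (K : ℝ) - (min (t u) (t v) : ℕ) ∧
        2 ≤ (p.edges.map (caterpillarWeight K V g t)).sum ∧
        ((K : ℝ) ≤ (p.edges.map (caterpillarWeight K V g t)).sum ↔ G.Adj u v) := by
  intro u v huv
  have htu := ht u; have htv := ht v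
  have hKu := hKub u; have hKv := hKub v
  constructor
  · -- existence of a path
    have hiu : t u - 1 < K := by omega
    have hiv : t v - 1 < K := by omega
    set iu : Fin K := ⟨t u - 1, hiu⟩ with hiu'
    set iv : Fin K := ⟨t v - 1, hiv⟩ with hiv'
    have hmk : ∃ w : (caterpillar K V t).Walk (Sum.inl iu) (Sum.inl iv),
        w.IsPath ∧ ∀ x ∈ w.support, ∃ j : Fin K, x = Sum.inl j := by
      rcases le_total ((iu : ℕ)) ((iv : ℕ)) with hle | hle
      · obtain ⟨w, hw, hws⟩ := spine_walk (t := t) ((iv : ℕ) - (iu : ℕ)) iu iv (by omega)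
        exact ⟨w, hw, fun x hx => (hws x hx).imp fun j hj => hj.1⟩
      · obtain ⟨w, hw, hws⟩ := spine_walk (t := t) ((iu : ℕ) - (iv : ℕ)) iv iu (by omega)
        refine ⟨w.reverse, hw.reverse, fun x hx => ?_⟩
        rw [Walk.support_reverse, List.mem_reverse] at hx
        exact (hws x hx).imp fun j hj => hj.1
    obtain ⟨w, hw, hws⟩ := hmk
    have h1 : (caterpillar K V t).Adj (Sum.inr u) (Sum.inl iu) := by
      rw [caterpillar, SimpleGraph.fromRel_adj]
      exact ⟨by simp, Or.inr (Or.inr ⟨iu, u, rfl, rfl, by show t u - 1 + 1 = t u; omega⟩)⟩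
    have h2 : (caterpillar K V t).Adj (Sum.inl iv) (Sum.inr v) := by
      rw [caterpillar, SimpleGraph.fromRel_adj]
      exact ⟨by simp, Or.inl (Or.inr ⟨iv, v, rfl, rfl, by show t v - 1 + 1 = t v; omega⟩)⟩
    refine ⟨Walk.cons h1 (w.append (Walk.cons h2 Walk.nil)), ?_⟩
    rw [Walk.isPath_def, Walk.support_cons, Walk.support_append, Walk.support_cons,
      Walk.support_nil]
    simp only [List.tail_cons]
    refine List.nodup_cons.mpr ⟨?_, ?_⟩
    · intro hmem
      rcases List.mem_append.mp hmem with hx | hx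
      · obtain ⟨j, hj⟩ := hws _ hx
        exact nomatch hj
      · rw [List.mem_singleton] at hx
        exact huv (by injection hx)
    · refine List.nodup_append'.mpr ⟨hw.support_nodup, List.nodup_singleton _, ?_⟩
      intro x hx hx'
      rw [List.mem_singleton] at hx'
      subst hx'
      obtain ⟨j, hj⟩ := hws _ hx
      exact nomatch hj
  · -- every path has the stated weight sum
    intro p hp
    have hsum : (p.edges.map (caterpillarWeight K V g t)).sum
        = (g u : ℝ) + (g v : ℝ) + (K : ℝ) - (min (t u) (t v) : ℕ) := by
      cases p with
      | nil => exact absurd rfl huv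
      | @cons _ b _ h q =>
        obtain ⟨i, rfl, hi⟩ := adj_inr h
        rw [Walk.cons_isPath_iff] at hp
        obtain ⟨hqsum, -⟩ := key (g := g) ht q.length i v q le_rfl hp.1
        rw [Walk.edges_cons, List.map_cons, List.sum_cons, hqsum, Sym2.eq_swap,
          weight_leaf, hi]
        have hd : Nat.dist (t u) (t v) + 2 * min (t u) (t v) = t u + t v := by
          rcases le_total (t u) (t v) with hle | hle
          · rw [Nat.dist_eq_sub_of_le hle]; omega
          · rw [Nat.dist_eq_sub_of_le_right hle]; omega
        have hd' := congrArg (Nat.cast : ℕ → ℝ) hd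
        push_cast at hd' ⊢
        linarith
    refine ⟨hsum, ?_, ?_⟩
    · rw [hsum]
      have h1 : (1 : ℝ) ≤ (g u : ℝ) := by exact_mod_cast hg u
      have h2 : (1 : ℝ) ≤ (g v : ℝ) := by exact_mod_cast hg v
      have h3 : ((min (t u) (t v) : ℕ) : ℝ) ≤ (K : ℝ) := by
        exact_mod_cast le_trans (min_le_left _ _) hKu
      linarith
    · rw [hsum, hadj u v huv]
      constructor
      · intro hK
        have : ((min (t u) (t v) : ℕ) : ℝ) ≤ (g u : ℝ) + (g v : ℝ) := by linarith
        exact_mod_cast this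
      · intro hle
        have : ((min (t u) (t v) : ℕ) : ℝ) ≤ (g u : ℝ) + (g v : ℝ) := by exact_mod_cast hle
        linarith
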